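/- Let α > 0, T > 0. Let u : [0, T] × ℝ² → ℝ² be continuous and bounded, let f : [0, T] × ℝ² → ℝ be continuous and bounded, and let ω : [0, T] × ℝ² → ℝ be continuously differentiable and bounded, satisfying pointwise the damped transport equation ∂_t ω(t,x) + α ω(t,x) + u(t,x) · ∇_x ω(t,x) = f(t,x) for all (t,x) ∈ [0,T] × ℝ². Then for all t ∈ [0, T]: sup_{x ∈ ℝ²} |ω(t,x)| ≤ e^{−α t} sup_{x ∈ ℝ²} |ω(0,x)| + (1/α) sup_{(s,x) ∈ [0,T] × ℝ²} |f(s,x)|. -/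

import Mathlib

open MeasureTheory

open Filter Topology Set in
private lemma deriv_nonneg_of_isMaxOn_right' {g : ℝ → ℝ} {g' a b t : ℝ} (hg : HasDerivAt g g' t)
    (hmax : ∀ s ∈ Set.Icc a b, g s ≤ g t) (hat : a < t) (htb : t ≤ b) : 0 ≤ g' := by
  have h0 : Set.Iio t \ {t} = Set.Iio t := Set.diff_singleton_eq_self (by simp)
  have h1 : Tendsto (slope g t) (𝓝[Set.Iio t] t) (𝓝 g') := by
    have := hasDerivWithinAt_iff_tendsto_slope.mp (hg.hasDerivWithinAt (s := Set.Iio t))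
    rwa [h0] at this
  have h2 : ∀ᶠ s in 𝓝[Set.Iio t] t, 0 ≤ slope g t s := by
    filter_upwards [Ioo_mem_nhdsLT_of_mem (Set.mem_Ioc.2 ⟨hat, le_refl t⟩)] with s hs
    rw [slope_def_field]
    have hnum : g s - g t ≤ 0 := sub_nonpos.2 (hmax s ⟨hs.1.le, hs.2.le.trans htb⟩)
    have hden : s - t < 0 := sub_neg.2 hs.2
    have := div_nonneg (neg_nonneg.2 hnum) (neg_nonneg.2 hden.le)
    rwa [neg_div_neg_eq] at this
  exact ge_of_tendsto h1 h2

section phihelp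
variable {E : Type*} [NormedAddCommGroup E] [InnerProductSpace ℝ E]

private lemma phi_fderiv' (x₀ x : E) : ∃ D : E →L[ℝ] ℝ,
    HasFDerivAt (fun y => Real.sqrt (1 + ‖y - x₀‖^2)) D x ∧ ‖D‖ ≤ 1 := by
  have hpos : (0:ℝ) < 1 + ‖x - x₀‖^2 := by positivity
  have h1 : HasFDerivAt (fun y : E => y - x₀) (ContinuousLinearMap.id ℝ E) x :=
    (hasFDerivAt_id x).sub_const x₀
  have h2 : HasFDerivAt (fun y : E => 1 + ‖y - x₀‖^2)
      (2 • (innerSL ℝ (x - x₀)).comp (ContinuousLinearMap.id ℝ E)) x := by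
    have := h1.norm_sq
    simpa using this.const_add 1
  have h3 := h2.sqrt hpos.ne'
  refine ⟨_, h3, ?_⟩
  refine ContinuousLinearMap.opNorm_le_bound _ zero_le_one ?_
  intro y
  have hip : |inner ℝ (x - x₀) y| ≤ ‖x - x₀‖ * ‖y‖ := abs_real_inner_le_norm _ _
  have hr : ‖x - x₀‖ ≤ Real.sqrt (1 + ‖x - x₀‖^2) := by
    have := Real.sqrt_le_sqrt (show ‖x - x₀‖^2 ≤ 1 + ‖x - x₀‖^2 by linarith)
    rwa [Real.sqrt_sq (norm_nonneg _)] at this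
  have hs : 0 < Real.sqrt (1 + ‖x - x₀‖^2) := Real.sqrt_pos.2 hpos
  simp only [ContinuousLinearMap.coe_smul', Pi.smul_apply, ContinuousLinearMap.smul_apply,
    ContinuousLinearMap.coe_comp', Function.comp_apply, ContinuousLinearMap.coe_id', id_eq,
    innerSL_apply_apply, smul_eq_mul]
  rw [Real.norm_eq_abs, nsmul_eq_mul, abs_mul, abs_mul]
  have h4 : |(1:ℝ) / (2 * Real.sqrt (1 + ‖x - x₀‖^2))| = 1 / (2 * Real.sqrt (1 + ‖x - x₀‖^2)) := by
    rw [abs_of_pos]; positivity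
  rw [h4]
  have h5 : |((2:ℕ):ℝ)| = 2 := by norm_num
  rw [h5, div_mul_eq_mul_div, one_mul, div_le_iff₀ (by positivity)]
  have h6 := mul_le_mul_of_nonneg_right hr (norm_nonneg y)
  nlinarith [abs_nonneg (inner ℝ (x - x₀) y : ℝ), norm_nonneg y]

end phihelp

local notation "E2" => EuclideanSpace ℝ (Fin 2)

set_option maxHeartbeats 2000000 in
private lemma key {α T M C A F : ℝ} (hα : 0 < α)
    {u : ℝ → E2 → E2} {f ω : ℝ → E2 → ℝ}
    (hu : ∀ t x, ‖u t x‖ ≤ M)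
    (hω : ContDiff ℝ 1 (fun q : ℝ × E2 => ω q.1 q.2))
    (hC : ∀ t x, |ω t x| ≤ C)
    (heq : ∀ t ∈ Set.Icc (0:ℝ) T, ∀ x,
      deriv (fun s => ω s x) t + α * ω t x + fderiv ℝ (fun y => ω t y) x (u t x) = f t x)
    (hA : ∀ x, ω 0 x ≤ A) (hF : ∀ t ∈ Set.Icc (0:ℝ) T, ∀ x, f t x ≤ F) (hF0 : 0 ≤ F)
    {t₀ : ℝ} (ht₀ : t₀ ∈ Set.Icc (0:ℝ) T) (x₀ : E2) :
    ω t₀ x₀ ≤ Real.exp (-α * t₀) * A + F / α := by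
  obtain ⟨ht₀0, ht₀T⟩ := ht₀
  have hM : 0 ≤ M := (norm_nonneg _).trans (hu 0 x₀)
  have hC0 : 0 ≤ C := (abs_nonneg _).trans (hC 0 x₀)
  have hΩd : Differentiable ℝ (fun q : ℝ × E2 => ω q.1 q.2) := hω.differentiable one_ne_zero
  have hst : ∀ (x : E2) (t : ℝ), HasDerivAt (fun s => ω s x) (deriv (fun s => ω s x) t) t := by
    intro x t
    have h : DifferentiableAt ℝ (fun s : ℝ => ω s x) t := by
      have := DifferentiableAt.comp t (hΩd (t, x)) (DifferentiableAt.prodMk (𝕜 := ℝ) differentiableAt_fun_id (differentiableAt_const x))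
      simpa [Function.comp_def] using this
    exact h.hasDerivAt
  have hsx : ∀ (t : ℝ) (x : E2), HasFDerivAt (fun y => ω t y) (fderiv ℝ (fun y => ω t y) x) x := by
    intro t x
    have h : DifferentiableAt ℝ (fun y : E2 => ω t y) x := by
      have := DifferentiableAt.comp x (hΩd (t, x)) (DifferentiableAt.prodMk (𝕜 := ℝ) (differentiableAt_const t) differentiableAt_fun_id)
      simpa [Function.comp_def] using this
    exact h.hasFDerivAt
  have hexp : ∀ s : ℝ, HasDerivAt (fun r : ℝ => Real.exp (α*r)) (α * Real.exp (α*s)) s := by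
    intro s
    have h0 : HasDerivAt (fun r : ℝ => α*r) α s := by simpa using (hasDerivAt_id s).const_mul α
    have := (Real.hasDerivAt_exp (α*s)).comp s h0
    simpa [Function.comp_def, mul_comm] using this
  have main : ∀ ε > (0:ℝ), Real.exp (α*t₀) * ω t₀ x₀ - F/α*(Real.exp (α*t₀) - 1)
      ≤ A + ε*((M+1)*t₀ + 1) := by
    intro ε hε
    set δ : ℝ := ε*(M+1) with hδdef
    have hδ : 0 ≤ δ := mul_nonneg hε.le (by linarith)
    set φ : E2 → ℝ := fun x => Real.sqrt (1 + ‖x - x₀‖^2) with hφdef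
    have hφ0 : ∀ x, 0 ≤ φ x := fun x => Real.sqrt_nonneg _
    have hφ1 : ∀ x : E2, ‖x - x₀‖ ≤ φ x := by
      intro x
      have := Real.sqrt_le_sqrt (show ‖x - x₀‖^2 ≤ 1 + ‖x - x₀‖^2 by nlinarith)
      rwa [Real.sqrt_sq (norm_nonneg _)] at this
    have hφx₀ : φ x₀ = 1 := by simp [hφdef]
    have hφcont : Continuous φ := Real.continuous_sqrt.comp (by continuity)
    set W : ℝ × E2 → ℝ := fun q =>
      Real.exp (α*q.1) * ω q.1 q.2 - F/α*(Real.exp (α*q.1) - 1) - δ*q.1 - ε*φ q.2 with hWdef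
    have hexp_c : Continuous fun q : ℝ × E2 => Real.exp (α*q.1) :=
      Real.continuous_exp.comp (continuous_const.mul continuous_fst)
    have hWcont : Continuous W :=
      (((hexp_c.mul hω.continuous).sub (continuous_const.mul (hexp_c.sub continuous_const))).sub
        (continuous_const.mul continuous_fst)).sub (continuous_const.mul (hφcont.comp continuous_snd))
    have hWbd : ∀ t ∈ Set.Icc 0 t₀, ∀ x : E2, W (t, x) ≤ Real.exp (α*T)*C - ε*φ x := by
      intro t ht x
      have h1 : Real.exp (α*t) ≤ Real.exp (α*T) := Real.exp_le_exp.2 (by nlinarith [ht.2])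
      have h2 := abs_le.1 (hC t x)
      have h3 : Real.exp (α*t)*ω t x ≤ Real.exp (α*T)*C := by
        nlinarith [Real.exp_pos (α*t)]
      have h4 : 1 ≤ Real.exp (α*t) := Real.one_le_exp (mul_nonneg hα.le ht.1)
      have h5 : 0 ≤ F/α*(Real.exp (α*t)-1) := mul_nonneg (div_nonneg hF0 hα.le) (by linarith)
      have h6 : 0 ≤ δ*t := mul_nonneg hδ ht.1
      simp only [hWdef]
      linarith
    set R : ℝ := (Real.exp (α*T)*C - W (t₀, x₀))/ε + 1 with hRdef
    have hWx₀ : W (t₀,x₀) ≤ Real.exp (α*T)*C := by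
      have h := hWbd t₀ ⟨ht₀0, le_refl _⟩ x₀
      nlinarith [hφ0 x₀]
    have hR1 : (1:ℝ) ≤ R := by
      rw [hRdef]
      have : 0 ≤ (Real.exp (α*T)*C - W (t₀,x₀))/ε := div_nonneg (by linarith) hε.le
      linarith
    have hεR : ε * R = Real.exp (α*T)*C - W (t₀,x₀) + ε := by
      rw [hRdef]; field_simp
    have hfar : ∀ t ∈ Set.Icc 0 t₀, ∀ x : E2, R < ‖x - x₀‖ → W (t,x) < W (t₀,x₀) := by
      intro t ht x hx
      have h1 := hWbd t ht x
      have h2 : ε * R < ε * φ x := (mul_lt_mul_iff_right₀ hε).2 (hx.trans_le (hφ1 x))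
      linarith
    have hKc : IsCompact (Set.Icc (0:ℝ) t₀ ×ˢ Metric.closedBall x₀ R) :=
      isCompact_Icc.prod (isCompact_closedBall _ _)
    have hmemK : (t₀, x₀) ∈ Set.Icc (0:ℝ) t₀ ×ˢ Metric.closedBall x₀ R := by
      refine ⟨⟨ht₀0, le_refl _⟩, ?_⟩
      simp only [Metric.mem_closedBall, dist_self]
      linarith
    obtain ⟨q, hqK, hqmax⟩ := hKc.exists_isMaxOn ⟨_, hmemK⟩ hWcont.continuousOn
    obtain ⟨hq1, hq2⟩ := hqK
    have hglob : ∀ t ∈ Set.Icc 0 t₀, ∀ x : E2, W (t,x) ≤ W q := by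
      intro t ht x
      by_cases hx : x ∈ Metric.closedBall x₀ R
      · exact hqmax (Set.mk_mem_prod ht hx)
      · have hxx : R < ‖x - x₀‖ := by
          rw [Metric.mem_closedBall, dist_eq_norm] at hx
          linarith [not_le.1 hx]
        exact ((hfar t ht x hxx).le.trans (hqmax hmemK))
    rcases eq_or_lt_of_le hq1.1 with hq0 | hq0
    · -- max at time 0
      have h1 := hglob t₀ ⟨ht₀0, le_refl _⟩ x₀
      have h2 : W q ≤ A := by
        have hq' : W q = Real.exp (α*q.1) * ω q.1 q.2 - F/α*(Real.exp (α*q.1)-1)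
            - δ*q.1 - ε*φ q.2 := rfl
        rw [hq', ← hq0]
        simp only [mul_zero, Real.exp_zero, one_mul, sub_self, sub_zero]
        nlinarith [hA q.2, hφ0 q.2]
      have h3 : W (t₀,x₀) = Real.exp (α*t₀) * ω t₀ x₀ - F/α*(Real.exp (α*t₀)-1)
          - δ*t₀ - ε*1 := by rw [hWdef]; simp [hφx₀]
      rw [h3] at h1
      have h8 : ε*((M+1)*t₀+1) = δ*t₀ + ε := by rw [hδdef]; ring
      have h9 := h1.trans h2
      nlinarith [h9, h8]
    · -- interior/right max in time : contradiction
      exfalso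
      have hqT : q.1 ∈ Set.Icc (0:ℝ) T := ⟨hq1.1, hq1.2.trans ht₀T⟩
      -- time derivative
      have hg : HasDerivAt (fun s => W (s, q.2))
          (α*Real.exp (α*q.1)*ω q.1 q.2 + Real.exp (α*q.1)*(deriv (fun s => ω s q.2) q.1)
            - F/α*(α*Real.exp (α*q.1)) - δ) q.1 := by
        simp only [hWdef]
        have h1 := (hexp q.1).mul (hst q.2 q.1)
        have h2 := ((hexp q.1).sub_const 1).const_mul (F/α)
        have h3 : HasDerivAt (fun s : ℝ => δ*s) δ q.1 := by
          simpa using (hasDerivAt_id q.1).const_mul δ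
        have h4 : HasDerivAt (fun _ : ℝ => ε*φ q.2) 0 q.1 := hasDerivAt_const _ _
        have h5 := ((h1.sub h2).sub h3).sub h4
        exact h5.congr_deriv (by ring)
      have hgmax : ∀ s ∈ Set.Icc 0 t₀, (fun s => W (s, q.2)) s ≤ (fun s => W (s, q.2)) q.1 := by
        intro s hs
        exact hglob s hs q.2
      have hderiv_nonneg := deriv_nonneg_of_isMaxOn_right' hg hgmax hq0 hq1.2
      -- spatial derivative
      obtain ⟨D, hD, hDn⟩ := phi_fderiv' x₀ q.2
      have hx : HasFDerivAt (fun y => W (q.1, y))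
          ((Real.exp (α*q.1)) • (fderiv ℝ (fun y => ω q.1 y) q.2) - ε • D) q.2 := by
        simp only [hWdef]
        have h1 := (hsx q.1 q.2).const_mul (Real.exp (α*q.1))
        have h2 := hD.const_mul ε
        exact ((h1.sub_const _).sub_const _).sub h2
      have hlm : IsLocalMax (fun y => W (q.1, y)) q.2 :=
        Filter.Eventually.of_forall fun y => hglob q.1 hq1 y
      have hzero := hlm.hasFDerivAt_eq_zero hx
      have happ := DFunLike.congr_fun hzero (u q.1 q.2)
      rw [ContinuousLinearMap.sub_apply, ContinuousLinearMap.smul_apply,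
        ContinuousLinearMap.smul_apply, ContinuousLinearMap.zero_apply,
        smul_eq_mul, smul_eq_mul] at happ
      have hDu : |D (u q.1 q.2)| ≤ M := by
        calc |D (u q.1 q.2)| = ‖D (u q.1 q.2)‖ := (Real.norm_eq_abs _).symm
          _ ≤ ‖D‖ * ‖u q.1 q.2‖ := D.le_opNorm _
          _ ≤ 1 * M := mul_le_mul hDn (hu q.1 q.2) (norm_nonneg _) zero_le_one
          _ = M := one_mul M
      have hpde := heq q.1 hqT q.2
      have hfF := hF q.1 hqT q.2
      have hEq : (0:ℝ) < Real.exp (α*q.1) := Real.exp_pos _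
      have hFα : F/α*(α*Real.exp (α*q.1)) = F*Real.exp (α*q.1) := by
        field_simp
      rw [hFα] at hderiv_nonneg
      have h5 : deriv (fun s => ω s q.2) q.1 + α * ω q.1 q.2
          ≤ F - fderiv ℝ (fun y => ω q.1 y) q.2 (u q.1 q.2) := by linarith
      have h6 := mul_le_mul_of_nonneg_left h5 hEq.le
      have h7 := mul_le_mul_of_nonneg_left (abs_le.1 hDu).1 hε.le
      nlinarith [h6, happ, h7, hε, hδdef]
  -- conclude
  have hc : (0:ℝ) < (M+1)*t₀ + 1 := by nlinarith
  have h1 : Real.exp (α*t₀) * ω t₀ x₀ - F/α*(Real.exp (α*t₀) - 1) ≤ A := by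
    refine le_of_forall_pos_le_add ?_
    intro η hη
    have := main (η/((M+1)*t₀+1)) (by positivity)
    rwa [div_mul_cancel₀ _ hc.ne'] at this
  have hE : (0:ℝ) < Real.exp (α*t₀) := Real.exp_pos _
  have hFα : (0:ℝ) ≤ F/α := div_nonneg hF0 hα.le
  have h3 : ω t₀ x₀ * Real.exp (α*t₀) ≤ A + F/α * Real.exp (α*t₀) := by nlinarith
  have h4 : ω t₀ x₀ ≤ (A + F/α * Real.exp (α*t₀)) / Real.exp (α*t₀) :=
    (le_div_iff₀ hE).mpr h3
  rw [neg_mul, Real.exp_neg]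
  calc ω t₀ x₀ ≤ (A + F/α * Real.exp (α*t₀)) / Real.exp (α*t₀) := h4
    _ = (Real.exp (α*t₀))⁻¹ * A + F/α := by
        rw [add_div, mul_div_assoc, div_self hE.ne', mul_one, div_eq_inv_mul]

theorem vorticity_maximum_principle (α T : ℝ) (hα : 0 < α) (hT : 0 < T)
    (u : ℝ → EuclideanSpace ℝ (Fin 2) → EuclideanSpace ℝ (Fin 2))
    (f : ℝ → EuclideanSpace ℝ (Fin 2) → ℝ)
    (ω : ℝ → EuclideanSpace ℝ (Fin 2) → ℝ)
    (hu_cont : Continuous (fun q : ℝ × EuclideanSpace ℝ (Fin 2) => u q.1 q.2))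
    (hu_bdd : ∃ M, ∀ t x, ‖u t x‖ ≤ M)
    (hf_cont : Continuous (fun q : ℝ × EuclideanSpace ℝ (Fin 2) => f q.1 q.2))
    (hf_bdd : ∃ M, ∀ t x, |f t x| ≤ M)
    (hω_smooth : ContDiff ℝ 1 (fun q : ℝ × EuclideanSpace ℝ (Fin 2) => ω q.1 q.2))
    (hω_bdd : ∃ M, ∀ t x, |ω t x| ≤ M)
    (heq : ∀ t ∈ Set.Icc (0 : ℝ) T, ∀ x,
      deriv (fun s => ω s x) t + α * ω t x +
        fderiv ℝ (fun y => ω t y) x (u t x) = f t x) :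
    ∀ t ∈ Set.Icc (0 : ℝ) T,
      (⨆ x, |ω t x|) ≤ Real.exp (-α * t) * (⨆ x, |ω 0 x|) +
        (1 / α) * ⨆ s ∈ Set.Icc (0 : ℝ) T, ⨆ x, |f s x| := by
  intro t ht
  obtain ⟨Mu, hMu⟩ := hu_bdd
  obtain ⟨Mf, hMf⟩ := hf_bdd
  obtain ⟨Mω, hMω⟩ := hω_bdd
  set A := ⨆ x, |ω 0 x| with hAdef
  have hAb : BddAbove (Set.range fun x : E2 => |ω 0 x|) :=
    ⟨Mω, by rintro y ⟨x, rfl⟩; exact hMω 0 x⟩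
  have hA : ∀ x, |ω 0 x| ≤ A := fun x => le_ciSup hAb x
  have hGb : ∀ s : ℝ, BddAbove (Set.range fun x : E2 => |f s x|) := fun s =>
    ⟨Mf, by rintro y ⟨x, rfl⟩; exact hMf s x⟩
  have hG : ∀ (s : ℝ) (x : E2), |f s x| ≤ ⨆ x, |f s x| := fun s x => le_ciSup (hGb s) x
  have hGle : ∀ s : ℝ, (⨆ x : E2, |f s x|) ≤ Mf := fun s => ciSup_le (hMf s)
  have hG0 : ∀ s : ℝ, 0 ≤ ⨆ x : E2, |f s x| := fun s => (abs_nonneg _).trans (hG s 0)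
  have hOb : BddAbove (Set.range fun s : ℝ =>
      ⨆ (_ : s ∈ Set.Icc (0:ℝ) T), ⨆ x : E2, |f s x|) := by
    refine ⟨max Mf 0, ?_⟩
    rintro y ⟨s, rfl⟩
    show (⨆ (_ : s ∈ Set.Icc (0:ℝ) T), ⨆ x : E2, |f s x|) ≤ Mf ⊔ 0
    by_cases hs : s ∈ Set.Icc (0:ℝ) T
    · rw [ciSup_pos hs]; exact (hGle s).trans (le_max_left _ _)
    · haveI : IsEmpty (s ∈ Set.Icc (0:ℝ) T) := ⟨hs⟩
      rw [Real.iSup_of_isEmpty]; exact le_max_right _ _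
  set F := ⨆ s ∈ Set.Icc (0:ℝ) T, ⨆ x, |f s x| with hFdef
  rw [show (1:ℝ)/α * F = F/α from one_div_mul_eq_div α F]
  have hFF : ∀ s ∈ Set.Icc (0:ℝ) T, (⨆ x : E2, |f s x|) ≤ F := by
    intro s hs
    have h := le_ciSup hOb s
    rwa [ciSup_pos hs] at h
  have hF0 : 0 ≤ F := (hG0 0).trans (hFF 0 ⟨le_refl 0, hT.le⟩)
  have hfle : ∀ s ∈ Set.Icc (0:ℝ) T, ∀ x, f s x ≤ F := fun s hs x =>
    (le_abs_self _).trans ((hG s x).trans (hFF s hs))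
  have hfle' : ∀ s ∈ Set.Icc (0:ℝ) T, ∀ x, -f s x ≤ F := fun s hs x =>
    (neg_le_abs _).trans ((hG s x).trans (hFF s hs))
  refine ciSup_le fun x => abs_le.2 ⟨?_, ?_⟩
  · -- lower bound
    have hω' : ContDiff ℝ 1 (fun q : ℝ × E2 => -ω q.1 q.2) := hω_smooth.neg
    have hC' : ∀ (t : ℝ) (x : E2), |-ω t x| ≤ Mω := by
      intro t x; rw [abs_neg]; exact hMω t x
    have heq' : ∀ s ∈ Set.Icc (0:ℝ) T, ∀ y : E2,
        deriv (fun r => -ω r y) s + α * (-ω s y) +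
          fderiv ℝ (fun z => -ω s z) y (u s y) = -f s y := by
      intro s hs y
      rw [deriv.fun_neg, fderiv_fun_neg]
      have h := heq s hs y
      simp only [ContinuousLinearMap.neg_apply]
      linarith
    have hA' : ∀ y : E2, -ω 0 y ≤ A := fun y => (neg_le_abs _).trans (hA y)
    have hk := key (ω := fun s y => -ω s y) (f := fun s y => -f s y) hα hMu hω' hC'
      heq' hA' hfle' hF0 ht x
    linarith [hk]
  · -- upper bound
    have hA'' : ∀ y : E2, ω 0 y ≤ A := fun y => (le_abs_self _).trans (hA y)
    have hk := key hα hMu hω_smooth hMω heq hA'' hfle hF0 ht x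
    exact hk
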